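/- The number of sylvester classes of m-permutations of n is the Fuss-Catalan number (1/(mn+1)) * binomial((m+1)n, n). -/

import Mathlib

open Relation List

/-- One elementary sylvester rewriting: `u a c v b x ≡ u c a v b x` for `a ≤ b < c`. -/
def SylvStep {α : Type*} [LinearOrder α] (w w' : List α) : Prop :=
  ∃ (u v x : List α) (a b c : α), a ≤ b ∧ b < c ∧
    w = u ++ [a, c] ++ v ++ [b] ++ x ∧ w' = u ++ [c, a] ++ v ++ [b] ++ x

set_option linter.unusedSectionVars false

namespace SylvProof

variable {α : Type*} [LinearOrder α]

inductive BT (α : Type*) where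
  | leaf : BT α
  | node : BT α → α → BT α → BT α

namespace BT

def ins (x : α) : BT α → BT α
  | leaf => node leaf x leaf
  | node l y r => if x ≤ y then node (ins x l) y r else node l y (ins x r)

def mem (x : α) : BT α → Prop
  | leaf => False
  | node l y r => x = y ∨ mem x l ∨ mem x r

def Valid : BT α → Prop
  | leaf => True
  | node l y r => Valid l ∧ Valid r ∧ (∀ a, mem a l → a ≤ y) ∧ (∀ a, mem a r → y < a)

def cnt (x : α) : BT α → ℕ
  | leaf => 0
  | node l y r => cnt x l + cnt x r + (if x = y then 1 else 0)

theorem mem_ins (a x : α) (T : BT α) : mem a (ins x T) ↔ a = x ∨ mem a T := by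
  induction T with
  | leaf => simp [ins, mem]
  | node l y r ihl ihr =>
      by_cases h : x ≤ y <;> simp [ins, h, mem, ihl, ihr] <;> tauto

theorem valid_ins (x : α) (T : BT α) (h : Valid T) : Valid (ins x T) := by
  induction T with
  | leaf => exact ⟨trivial, trivial, by simp [mem], by simp [mem]⟩
  | node l y r ihl ihr =>
      obtain ⟨hl, hr, hbl, hbr⟩ := h
      by_cases hxy : x ≤ y
      · simp only [ins, if_pos hxy]
        refine ⟨ihl hl, hr, ?_, hbr⟩
        intro a ha
        rcases (mem_ins a x l).1 ha with h | h
        · exact h ▸ hxy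
        · exact hbl a h
      · simp only [ins, if_neg hxy]
        refine ⟨hl, ihr hr, hbl, ?_⟩
        intro a ha
        rcases (mem_ins a x r).1 ha with h | h
        · exact h ▸ (lt_of_not_ge hxy)
        · exact hbr a h

theorem ins_comm {a b c : α} (T : BT α) (hT : Valid T) (hb : mem b T)
    (hab : a ≤ b) (hbc : b < c) : ins a (ins c T) = ins c (ins a T) := by
  induction T with
  | leaf => exact absurd hb id
  | node l y r ihl ihr =>
      obtain ⟨hl, hr, hbl, hbr⟩ := hT
      rcases le_or_gt c y with hcy | hyc
      · -- both go left; b is in l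
        have hay : a ≤ y := le_trans (le_trans hab hbc.le) hcy
        have hbmem : mem b l := by
          rcases hb with h | h | h
          · exact absurd (h ▸ hcy) (not_le.2 hbc)
          · exact h
          · exact absurd (hbr b h) (not_lt.2 (hbc.le.trans hcy))
        simp [ins, if_pos hcy, if_pos hay, ihl hl hbmem]
      · rcases le_or_gt a y with hay | hya
        · -- a left, c right
          simp [ins, if_pos hay, if_neg (not_le.2 hyc)]
        · -- both right; b in r
          have hbmem : mem b r := by
            rcases hb with h | h | h
            · exact absurd (h ▸ hya) (not_lt.2 hab)
            · exact absurd ((hab.trans (hbl b h)).trans_lt hya) (lt_irrefl a)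
            · exact h
          have hcy : ¬ c ≤ y := not_le.2 hyc
          simp [ins, if_neg (not_le.2 hya), if_neg hcy, ihr hr hbmem]

/-- Insert a word from right to left. -/
def P (w : List α) : BT α := w.foldr ins leaf

theorem valid_P (w : List α) : Valid (P w) := by
  induction w with
  | nil => trivial
  | cons a w ih => exact valid_ins a _ ih

theorem mem_P {w : List α} {a : α} (h : a ∈ w) : mem a (P w) := by
  induction w with
  | nil => simp at h
  | cons x w ih =>
      rcases List.mem_cons.1 h with h | h
      · exact (mem_ins a x (P w)).2 (Or.inl h)
      · exact (mem_ins a x (P w)).2 (Or.inr (ih h))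

theorem ins_node (x : α) (l : BT α) (y : α) (r : BT α) :
    ins x (node l y r) = if x ≤ y then node (ins x l) y r else node l y (ins x r) := rfl

theorem cnt_ins (a x : α) (T : BT α) :
    cnt a (ins x T) = cnt a T + (if a = x then 1 else 0) := by
  induction T with
  | leaf => show cnt a (node leaf x leaf) = _; simp [cnt]
  | node l y r ihl ihr =>
      rw [ins_node]
      by_cases h : x ≤ y
      · rw [if_pos h]; simp only [cnt, ihl]; ring
      · rw [if_neg h]; simp only [cnt, ihr]; ring

theorem cnt_P (a : α) (w : List α) : cnt a (P w) = w.count a := by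
  induction w with
  | nil => simp [P, cnt]
  | cons x w ih =>
      show cnt a (ins x (P w)) = _
      rw [cnt_ins, ih, List.count_cons]
      rcases eq_or_ne a x with h | h
      · simp [h]
      · simp [h, Ne.symm h]

theorem split_fold (y : α) : ∀ (w : List α) (L R : BT α),
    w.foldr ins (node L y R) =
      node ((w.filter (fun a => a ≤ y)).foldr ins L) y
        ((w.filter (fun a => ¬ a ≤ y)).foldr ins R) := by
  intro w
  induction w with
  | nil => intro L R; rfl
  | cons x w ih =>
      intro L R
      have hc : (x :: w).foldr ins (node L y R) = ins x (w.foldr ins (node L y R)) := rfl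
      rw [hc, ih]
      by_cases h : x ≤ y
      · rw [List.filter_cons_of_pos (by simpa using h),
          List.filter_cons_of_neg (by simpa using h)]
        simp [ins, h]
      · rw [List.filter_cons_of_neg (by simpa using h),
          List.filter_cons_of_pos (by simpa using h)]
        simp [ins, h]

def canon : BT α → List α
  | leaf => []
  | node l y r => canon r ++ canon l ++ [y]

theorem count_canon (a : α) (T : BT α) : (canon T).count a = cnt a T := by
  induction T with
  | leaf => simp [canon, cnt]
  | node l y r ihl ihr =>
      simp [canon, cnt, List.count_append, ihl, ihr, List.count_singleton]
      ring_nf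
      congr 1
      simp [eq_comm]

theorem mem_canon {a : α} {T : BT α} (h : a ∈ canon T) : mem a T := by
  induction T with
  | leaf => simp [canon] at h
  | node l y r ihl ihr =>
      simp only [canon, List.mem_append, List.mem_singleton] at h
      rcases h with (h | h) | h
      · exact Or.inr (Or.inr (ihr h))
      · exact Or.inr (Or.inl (ihl h))
      · exact Or.inl h

theorem P_canon {T : BT α} (h : Valid T) : P (canon T) = T := by
  induction T with
  | leaf => rfl
  | node l y r ihl ihr =>
      obtain ⟨hl, hr, hbl, hbr⟩ := h
      have hclf : (canon l).filter (fun a => a ≤ y) = canon l := by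
        rw [List.filter_eq_self]
        intro a ha; simpa using hbl a (mem_canon ha)
      have hclf2 : (canon l).filter (fun a => ¬ a ≤ y) = [] := by
        rw [List.filter_eq_nil_iff]
        intro a ha; simpa using hbl a (mem_canon ha)
      have hcrf : (canon r).filter (fun a => a ≤ y) = [] := by
        rw [List.filter_eq_nil_iff]
        intro a ha; simpa using not_le.2 (hbr a (mem_canon ha))
      have hcrf2 : (canon r).filter (fun a => ¬ a ≤ y) = canon r := by
        rw [List.filter_eq_self]
        intro a ha; simpa using not_le.2 (hbr a (mem_canon ha))
      show (canon r ++ canon l ++ [y]).foldr ins leaf = node l y r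
      rw [List.append_assoc, List.foldr_append, List.foldr_append]
      have h1 : ([y] : List α).foldr ins leaf = node leaf y leaf := rfl
      rw [h1, split_fold y (canon l), hclf, hclf2]
      show (canon r).foldr ins (node (P (canon l)) y (P [])) = node l y r
      rw [ihl hl, split_fold y (canon r), hcrf, hcrf2]
      show node (([] : List α).foldr ins l) y (P (canon r)) = node l y r
      rw [ihr hr]
      rfl

end BT

section Equivalence

variable {α : Type*} [LinearOrder α]

open BT

theorem sylvStep_append_ctx {w w' : List α} (p q : List α) (h : SylvStep w w') :
    SylvStep (p ++ w ++ q) (p ++ w' ++ q) := by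
  obtain ⟨u, v, x, a, b, c, hab, hbc, hw, hw'⟩ := h
  refine ⟨p ++ u, v, x ++ q, a, b, c, hab, hbc, ?_, ?_⟩
  · subst hw; simp
  · subst hw'; simp

theorem eqv_append {w w' : List α} (p q : List α) (h : EqvGen SylvStep w w') :
    EqvGen SylvStep (p ++ w ++ q) (p ++ w' ++ q) := by
  induction h with
  | rel _ _ h => exact EqvGen.rel _ _ (sylvStep_append_ctx p q h)
  | refl _ => exact EqvGen.refl _
  | symm _ _ _ ih => exact EqvGen.symm _ _ ih
  | trans a b c _ _ ih1 ih2 => exact EqvGen.trans _ _ _ ih1 ih2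

theorem eqv_cons {w w' : List α} (z : α) (h : EqvGen SylvStep w w') :
    EqvGen SylvStep (z :: w) (z :: w') := by
  have := eqv_append [z] [] h
  simpa using this

theorem eqv_move {y a : α} (hay : a ≤ y) :
    ∀ (v : List α), (∀ c ∈ v, y < c) → ∀ (s t : List α),
    EqvGen SylvStep (a :: (v ++ (s ++ y :: t))) (v ++ (a :: (s ++ y :: t))) := by
  intro v
  induction v with
  | nil => intro _ s t; exact EqvGen.refl _
  | cons c v ih =>
      intro hv s t
      have step : SylvStep (a :: (c :: v ++ (s ++ y :: t))) (c :: (a :: (v ++ (s ++ y :: t)))) := by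
        refine ⟨[], v ++ s, t, a, y, c, hay, hv c (List.mem_cons_self (a := c) (l := v)), ?_, ?_⟩ <;> simp
      refine EqvGen.trans _ _ _ (EqvGen.rel _ _ step) ?_
      exact eqv_cons c (ih (fun d hd => hv d (List.mem_cons_of_mem c hd)) s t)

theorem eqv_shuffle (y : α) : ∀ (w t : List α),
    EqvGen SylvStep (w ++ (y :: t))
      ((w.filter (fun a => ¬ a ≤ y)) ++ ((w.filter (fun a => a ≤ y)) ++ (y :: t))) := by
  intro w
  induction w with
  | nil => intro t; exact EqvGen.refl _
  | cons x w ih =>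
      intro t
      by_cases h : x ≤ y
      · rw [List.filter_cons_of_neg (by simpa using h), List.filter_cons_of_pos (by simpa using h)]
        have h1 : EqvGen SylvStep (x :: (w ++ (y :: t)))
            (x :: ((w.filter (fun a => ¬ a ≤ y)) ++ ((w.filter (fun a => a ≤ y)) ++ (y :: t)))) :=
          eqv_cons x (ih t)
        refine EqvGen.trans _ _ _ h1 ?_
        have h2 := eqv_move h (w.filter (fun a => ¬ a ≤ y))
          (fun c hc => by
            have := List.of_mem_filter hc
            simpa using this)
          (w.filter (fun a => a ≤ y)) t
        exact h2
      · rw [List.filter_cons_of_pos (by simpa using h), List.filter_cons_of_neg (by simpa using h)]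
        exact eqv_cons x (ih t)

theorem P_cons (x : α) (w : List α) : P (x :: w) = ins x (P w) := rfl

theorem P_concat_decomp (w : List α) (y : α) :
    P (w ++ [y]) = node (P (w.filter (fun a => a ≤ y))) y (P (w.filter (fun a => ¬ a ≤ y))) := by
  show (w ++ [y]).foldr ins leaf = _
  rw [List.foldr_append]
  have : ([y] : List α).foldr ins leaf = node leaf y leaf := rfl
  rw [this, split_fold]
  rfl

theorem toCanon : ∀ (n : ℕ) (w : List α), w.length ≤ n → EqvGen SylvStep w (canon (P w)) := by
  intro n
  induction n with
  | zero =>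
      intro w hw
      have : w = [] := List.eq_nil_of_length_eq_zero (Nat.le_zero.1 hw)
      subst this
      exact EqvGen.refl _
  | succ n ih =>
      intro w hw
      rcases List.eq_nil_or_concat w with rfl | ⟨w'', y, rfl⟩
      · exact EqvGen.refl _
      · rw [List.concat_eq_append] at hw ⊢
        have hlen : w''.length ≤ n := by
          simp only [List.length_append, List.length_singleton] at hw
          omega
        set big := w''.filter (fun a => ¬ a ≤ y) with hbig
        set small := w''.filter (fun a => a ≤ y) with hsmall
        have hsb : small.length ≤ n := le_trans (List.length_filter_le _ _) hlen
        have hbb : big.length ≤ n := le_trans (List.length_filter_le _ _) hlen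
        have h1 : EqvGen SylvStep (w'' ++ [y]) (big ++ (small ++ [y])) := eqv_shuffle y w'' []
        have h2 := eqv_append big [y] (ih small hsb)
        rw [List.append_assoc, List.append_assoc] at h2
        have h3 : EqvGen SylvStep (big ++ (canon (P small) ++ [y]))
            (canon (P big) ++ (canon (P small) ++ [y])) := by
          have := eqv_append [] (canon (P small) ++ [y]) (ih big hbb)
          simpa using this
        have hfin : canon (P (w'' ++ [y])) = canon (P big) ++ (canon (P small) ++ [y]) := by
          rw [P_concat_decomp]
          show canon (P big) ++ canon (P small) ++ [y] = _
          rw [List.append_assoc]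
        rw [hfin]
        exact EqvGen.trans _ _ _ h1 (EqvGen.trans _ _ _ h2 h3)

theorem P_append (u w : List α) : P (u ++ w) = u.foldr ins (P w) := by
  simp [P, List.foldr_append]

theorem P_step {w w' : List α} (h : SylvStep w w') : P w = P w' := by
  obtain ⟨u, v, x, a, b, c, hab, hbc, rfl, rfl⟩ := h
  have h1 : ∀ (d e : α), (u ++ [d, e] ++ v ++ [b] ++ x) = u ++ ([d, e] ++ (v ++ [b] ++ x)) := by
    intro d e; simp
  rw [h1 a c, h1 c a]
  have key : P ([a, c] ++ (v ++ [b] ++ x)) = P ([c, a] ++ (v ++ [b] ++ x)) := by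
    show ins a (ins c (P (v ++ [b] ++ x))) = ins c (ins a (P (v ++ [b] ++ x)))
    exact ins_comm _ (valid_P _) (mem_P (by simp)) hab hbc
  rw [P_append u ([a, c] ++ (v ++ [b] ++ x)), P_append u ([c, a] ++ (v ++ [b] ++ x))]
  exact congrArg (fun T => List.foldr ins T u) key

theorem P_eqv {w w' : List α} (h : EqvGen SylvStep w w') : P w = P w' := by
  induction h with
  | rel _ _ h => exact P_step h
  | refl _ => rfl
  | symm _ _ _ ih => exact ih.symm
  | trans _ _ _ _ _ ih1 ih2 => exact ih1.trans ih2

theorem eqv_of_P_eq {w w' : List α} (h : P w = P w') : EqvGen SylvStep w w' := by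
  refine EqvGen.trans _ _ _ (toCanon w.length w le_rfl) ?_
  rw [h]
  exact EqvGen.symm _ _ (toCanon w'.length w' le_rfl)

end Equivalence


section Counting

/-- Ballot-type numbers: `D m j n` counts lattice words with `n` up-steps `+m` and
`m*n+j` down-steps `-1` that stay strictly above `-j` before the end.  Defined here
purely by its recurrence. -/
def D (m : ℕ) : ℕ → ℕ → ℕ
  | _, 0 => 1
  | 0, _+1 => 0
  | j+1, n+1 => D m j (n+1) + D m (j+1+m) n
  termination_by j n => (n, j)

theorem D_zero_right (m j : ℕ) : D m j 0 = 1 := by cases j <;> (rw [D])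

theorem D_zero_left (m n : ℕ) : D m 0 (n+1) = 0 := by rw [D]

theorem D_rec (m j n : ℕ) : D m (j+1) (n+1) = D m j (n+1) + D m (j+1+m) n := by rw [D]

theorem D_one (m n : ℕ) : D m 1 (n+1) = D m (m+1) n := by
  rw [show (1 : ℕ) = 0 + 1 by rfl, D_rec, D_zero_left]
  simp [Nat.add_comm]

theorem D_conv (m : ℕ) : ∀ (b a K : ℕ),
    (∑ k ∈ Finset.range (K+1), D m a k * D m b (K-k)) = D m (a+b) K
  | 0, a, K => by
      rw [Nat.add_zero]
      rw [Finset.sum_eq_single K]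
      · simp [D_zero_right]
      · intro k hk hne
        have hk' : k < K + 1 := Finset.mem_range.1 hk
        have : K - k = (K - k - 1) + 1 := by omega
        rw [this, D_zero_left, Nat.mul_zero]
      · intro h; exact absurd (Finset.self_mem_range_succ K) h
  | b+1, a, 0 => by
      simp [D_zero_right]
  | b+1, a, K+1 => by
      have ih1 := D_conv m b a (K+1)
      have ih2 := D_conv m (b+1+m) a K
      have hsplit : (∑ k ∈ Finset.range (K+2), D m a k * D m (b+1) (K+1-k)) =
          (∑ k ∈ Finset.range (K+1), D m a k * D m (b+1) (K+1-k)) + D m a (K+1) * D m (b+1) 0 := by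
        rw [Finset.sum_range_succ]
        simp
      have hterm : ∀ k ∈ Finset.range (K+1),
          D m a k * D m (b+1) (K+1-k) =
            D m a k * D m b (K+1-k) + D m a k * D m (b+1+m) (K-k) := by
        intro k hk
        have hk' : k < K + 1 := Finset.mem_range.1 hk
        have h1 : K + 1 - k = (K - k) + 1 := by omega
        rw [h1, D_rec, Nat.mul_add]
      rw [hsplit, Finset.sum_congr rfl hterm, Finset.sum_add_distrib]
      have hsplit2 : (∑ k ∈ Finset.range (K+2), D m a k * D m b (K+1-k)) =
          (∑ k ∈ Finset.range (K+1), D m a k * D m b (K+1-k)) + D m a (K+1) * D m b 0 := by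
        rw [Finset.sum_range_succ]
        simp
      have hgoal : a + (b+1) = (a + b) + 1 := by omega
      have hgoal2 : a + (b+1+m) = a + b + 1 + m := by omega
      rw [hgoal, D_rec, ← ih1, ← hgoal2, ← ih2, hsplit2]
      simp [D_zero_right]
      ring
  termination_by b a K => (K, b)

theorem D_formula (m : ℕ) : ∀ (n j : ℕ),
    D m j n * ((m+1) * n + j) = j * Nat.choose ((m+1) * n + j) n
  | 0, j => by simp [D_zero_right]
  | n+1, 0 => by simp [D_zero_left]
  | n+1, j+1 => by
      have ih1 := D_formula m (n+1) j
      have ih2 := D_formula m n (j+1+m)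
      set N := (m+1) * (n+1) + (j+1) with hN
      have hmul : (m+1) * (n+1) = m * n + m + n + 1 := by ring
      have hmul2 : (m+1) * n = m * n + n := by ring
      have hN1 : (m+1) * (n+1) + j = N - 1 := by omega
      have hN2 : (m+1) * n + (j+1+m) = N - 1 := by omega
      rw [hN1] at ih1
      rw [hN2] at ih2
      have hrec : D m (j+1) (n+1) = D m j (n+1) + D m (j+1+m) n := D_rec m j n
      -- R := the combination
      have hR : D m (j+1) (n+1) * (N - 1) = j * Nat.choose (N-1) (n+1) + (j+1+m) * Nat.choose (N-1) n := by
        rw [hrec, Nat.add_mul, ih1, ih2]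
      -- key binomial identity
      have hkey : N * (j * Nat.choose (N-1) (n+1) + (j+1+m) * Nat.choose (N-1) n) =
          (N - 1) * ((j+1) * Nat.choose N (n+1)) := by
        have e1 : Nat.choose (N-1) (n+1) * (n+1) = Nat.choose (N-1) n * (N - 1 - n) :=
          Nat.choose_succ_right_eq (N-1) n
        have e2 : N * Nat.choose (N-1) n = Nat.choose N (n+1) * (n+1) := by
          have := Nat.add_one_mul_choose_eq (N-1) n
          have hN3 : N - 1 + 1 = N := by omega
          rw [hN3] at this
          exact this
        have hN4 : N - 1 - n = m * n + m + 1 + j := by omega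
        have hN5 : N - 1 = m * n + m + n + 1 + j := by omega
        -- multiply everything by (n+1) and cancel
        apply Nat.eq_of_mul_eq_mul_right (Nat.succ_pos n)
        calc N * (j * Nat.choose (N-1) (n+1) + (j+1+m) * Nat.choose (N-1) n) * (n+1)
            = N * (j * (Nat.choose (N-1) (n+1) * (n+1)) + (j+1+m) * Nat.choose (N-1) n * (n+1)) := by ring
          _ = N * (j * (Nat.choose (N-1) n * (N - 1 - n)) + (j+1+m) * Nat.choose (N-1) n * (n+1)) := by rw [e1]
          _ = N * Nat.choose (N-1) n * (j * (N - 1 - n) + (j+1+m) * (n+1)) := by ring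
          _ = N * Nat.choose (N-1) n * ((j+1) * (N - 1)) := by
              rw [hN4, hN5]; ring_nf
          _ = (N - 1) * ((j+1) * (Nat.choose N (n+1) * (n+1))) := by rw [← e2]; ring
          _ = (N - 1) * ((j+1) * Nat.choose N (n+1)) * (n+1) := by ring
      have hpos : 0 < N - 1 := by omega
      apply Nat.eq_of_mul_eq_mul_right hpos
      calc D m (j+1) (n+1) * N * (N - 1) = N * (D m (j+1) (n+1) * (N-1)) := by ring
        _ = N * (j * Nat.choose (N-1) (n+1) + (j+1+m) * Nat.choose (N-1) n) := by rw [hR]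
        _ = (N - 1) * ((j+1) * Nat.choose N (n+1)) := hkey
        _ = (j+1) * Nat.choose N (n+1) * (N-1) := by ring

theorem D_one_closed (m n : ℕ) : D m 1 n * (m * n + 1) = Nat.choose ((m+1) * n) n := by
  have h1 := D_formula m n 1
  -- D m 1 n * ((m+1)n + 1) = C((m+1)n + 1, n)
  have h2 := Nat.choose_mul_succ_eq ((m+1)*n) n
  -- C((m+1)n, n) * ((m+1)n + 1) = C((m+1)n+1, n) * ((m+1)n+1-n)
  have hmul2 : (m+1) * n = m * n + n := by ring
  have h3 : (m+1) * n + 1 - n = m * n + 1 := by omega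
  rw [h3] at h2
  have hpos : 0 < (m+1) * n + 1 := by omega
  apply Nat.eq_of_mul_eq_mul_right hpos
  calc D m 1 n * (m * n + 1) * ((m+1)*n + 1)
      = (D m 1 n * ((m+1)*n + 1)) * (m * n + 1) := by ring
    _ = (1 * Nat.choose ((m+1)*n + 1) n) * (m * n + 1) := by rw [h1]
    _ = Nat.choose ((m+1)*n + 1) n * (m * n + 1) := by ring
    _ = Nat.choose ((m+1)*n) n * ((m+1)*n + 1) := by rw [← h2]

end Counting


section Trees

open BT

variable {α : Type*} [LinearOrder α]

theorem cnt_node (a : α) (l : BT α) (y : α) (r : BT α) :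
    cnt a (node l y r) = cnt a l + cnt a r + (if a = y then 1 else 0) := rfl

theorem mem_of_cnt_pos {a : α} : ∀ {T : BT α}, 0 < cnt a T → mem a T
  | BT.leaf, h => by simp [cnt] at h
  | BT.node l y r, h => by
      by_cases h1 : a = y
      · exact Or.inl h1
      · rw [cnt_node, if_neg h1] at h
        have : 0 < cnt a l ∨ 0 < cnt a r := by omega
        rcases this with h2 | h2
        · exact Or.inr (Or.inl (mem_of_cnt_pos h2))
        · exact Or.inr (Or.inr (mem_of_cnt_pos h2))

theorem cnt_eq_zero_of_not_mem {a : α} {T : BT α} (h : ¬ mem a T) : cnt a T = 0 := by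
  by_contra h2
  exact h (mem_of_cnt_pos (Nat.pos_of_ne_zero h2))

theorem eq_leaf_of_cnt_zero {T : BT α} (h : ∀ a, cnt a T = 0) : T = BT.leaf := by
  cases T with
  | leaf => rfl
  | node l y r => have := h y; rw [cnt_node, if_pos rfl] at this; omega

/-- The set of valid binary search trees with prescribed content. -/
def TS (c : α → ℕ) : Type _ := {T : BT α // BT.Valid T ∧ ∀ a, BT.cnt a T = c a}

theorem length_canon [Fintype α] (T : BT α) :
    (canon T).length = ∑ a, cnt a T := by
  induction T with
  | leaf => simp [canon, cnt]
  | node l y r ihl ihr =>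
      show (canon r ++ canon l ++ [y]).length = ∑ a, cnt a (node l y r)
      simp only [List.length_append, List.length_singleton, ihl, ihr, cnt_node]
      rw [Finset.sum_add_distrib, Finset.sum_add_distrib]
      have : (∑ a, if a = y then (1:ℕ) else 0) = 1 := by simp
      rw [this]
      ring

instance finite_TS [Fintype α] (c : α → ℕ) : Finite (TS c) := by
  haveI : Finite {l : List α // l.length = ∑ a, c a} :=
    (inferInstance : Finite (List.Vector α (∑ a, c a)))
  apply Finite.of_injective
    (fun T : TS c => (⟨canon T.1, by
      rw [length_canon]
      exact Finset.sum_congr rfl (fun a _ => T.2.2 a)⟩ : List.Vector α (∑ a, c a)))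
  intro T T' h
  have h2 : canon T.1 = canon T'.1 := congrArg Subtype.val h
  have h3 := congrArg P h2
  rw [P_canon T.2.1, P_canon T'.2.1] at h3
  exact Subtype.ext h3

theorem nat_card_sigma {ι : Type*} [Fintype ι] (F : ι → Type*) [∀ i, Finite (F i)] :
    Nat.card (Σ i, F i) = ∑ i, Nat.card (F i) := by
  haveI := fun i => Fintype.ofFinite (F i)
  rw [Nat.card_eq_fintype_card, Fintype.card_sigma]
  exact Finset.sum_congr rfl (fun i _ => (Nat.card_eq_fintype_card).symm)

/-- Content function: letters of `s` have multiplicity `m`, the letter `z` has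
multiplicity `j`, everything else `0`. -/
def cfun (m : ℕ) (s : List α) (z : α) (j : ℕ) : α → ℕ :=
  fun a => if a ∈ s then m else if a = z then j else 0

-- sorted-list helpers
theorem sorted_facts {s : List α} {z : α} (hs : (s ++ [z]).Pairwise (· < ·)) :
    s.Pairwise (· < ·) ∧ (∀ a ∈ s, a < z) ∧ z ∉ s := by
  rw [List.pairwise_append] at hs
  obtain ⟨h1, _, h3⟩ := hs
  refine ⟨h1, fun a ha => h3 a ha z (List.mem_singleton_self z), fun hz => ?_⟩
  exact lt_irrefl z (h3 z hz z (List.mem_singleton_self z))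

theorem mem_take_lt {s : List α} (hss : s.Pairwise (· < ·)) {i : ℕ} (hi : i < s.length)
    {a : α} (ha : a ∈ s.take i) : a < s[i] := by
  obtain ⟨k, hk, hEq⟩ := List.getElem_of_mem ha
  have hk2 : k < i := lt_of_lt_of_le hk (by simp [List.length_take])
  rw [List.getElem_take] at hEq
  subst hEq
  exact List.pairwise_iff_getElem.1 hss k i (by omega) hi hk2

theorem mem_drop_gt {s : List α} (hss : s.Pairwise (· < ·)) {i : ℕ} (hi : i < s.length)
    {a : α} (ha : a ∈ s.drop (i+1)) : s[i] < a := by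
  obtain ⟨k, hk, hEq⟩ := List.getElem_of_mem ha
  have hk2 : i + 1 + k < s.length := by
    have := hk
    simp [List.length_drop] at this
    omega
  rw [List.getElem_drop] at hEq
  subst hEq
  exact List.pairwise_iff_getElem.1 hss i (i+1+k) hi hk2 (by omega)

theorem take_split (s : List α) {i : ℕ} (hi : i < s.length) :
    s = s.take i ++ s[i] :: s.drop (i+1) := by
  conv_lhs => rw [← List.take_append_drop i s]
  rw [List.drop_eq_getElem_cons hi]

end Trees


section MainCount

open BT

variable {α : Type*} [LinearOrder α]

theorem cnt_pos_of_mem {a : α} : ∀ {T : BT α}, mem a T → 0 < cnt a T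
  | BT.leaf, h => absurd h id
  | BT.node l y r, h => by
      rw [cnt_node]
      rcases h with h | h | h
      · rw [if_pos h]; omega
      · have := cnt_pos_of_mem h; omega
      · have := cnt_pos_of_mem h; omega

theorem take_concat_sorted {s : List α} (hss : s.Pairwise (· < ·)) {i : ℕ} (hi : i < s.length) :
    (s.take i ++ [s[i]]).Pairwise (· < ·) := by
  have he : s.take i ++ [s[i]] = s.take (i+1) := by
    rw [List.take_succ, List.getElem?_eq_getElem hi]
    rfl
  rw [he]
  exact List.Pairwise.sublist (List.take_sublist _ _) hss

theorem drop_concat_sorted {s : List α} {z : α} (hs : (s ++ [z]).Pairwise (· < ·)) (i : ℕ) :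
    (s.drop (i+1) ++ [z]).Pairwise (· < ·) :=
  List.Pairwise.sublist (List.Sublist.append_right (List.drop_sublist _ _) _) hs

theorem count_TS [Fintype α] (m : ℕ) (hm : 1 ≤ m) :
    ∀ (L : ℕ) (s : List α), s.length = L → ∀ (z : α), (s ++ [z]).Pairwise (· < ·) →
      ∀ j, j ≤ m → Nat.card (TS (cfun m s z j)) = D m (j+1) L := by
  intro L
  induction L using Nat.strong_induction_on with
  | _ L IHL =>
  intro s hL z hs j hjm
  obtain ⟨hss, hlt, hzs⟩ := sorted_facts hs
  induction j with
  | zero =>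
      rcases List.eq_nil_or_concat s with rfl | ⟨s', z', hsplit⟩
      · have hL0 : L = 0 := by simpa using hL.symm
        subst hL0
        have hcz : ∀ a, cfun m ([] : List α) z 0 a = 0 := by
          intro a; simp [cfun]
        haveI : Unique (TS (cfun m ([] : List α) z 0)) :=
          { default := ⟨BT.leaf, trivial, fun a => by simp [cnt, hcz]⟩
            uniq := fun T => Subtype.ext (eq_leaf_of_cnt_zero (fun a => (T.2.2 a).trans (hcz a))) }
        rw [Nat.card_unique, D_zero_right]
      · rw [List.concat_eq_append] at hsplit
        subst hsplit
        have hz's : z' ∉ s' := by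
          intro h
          have h2 : List.Pairwise (· < ·) (s' ++ [z']) := hss
          rw [List.pairwise_append] at h2
          exact lt_irrefl z' (h2.2.2 z' h (z') (List.mem_singleton_self _))
        have hfun : cfun m (s' ++ [z']) z 0 = cfun m s' z' m := by
          funext a
          simp only [cfun, List.mem_append, List.mem_singleton]
          by_cases h1 : a ∈ s'
          · simp [h1]
          · by_cases h2 : a = z'
            · simp [h1, h2]
            · have h3 : a = z → ¬ (a ∈ s' ∨ a = z') := by
                rintro rfl (h | h)
                · exact (sorted_facts hs).2.2 (List.mem_append.2 (Or.inl h))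
                · exact (sorted_facts hs).2.2 (List.mem_append.2 (Or.inr (by simp [h])))
              by_cases h4 : a = z
              · rcases not_or.1 (h3 h4) with ⟨h5, h6⟩
                rw [if_neg (by tauto), if_pos h4, if_neg h1, if_neg h2]
              · simp [h1, h2, h4]
        rw [hfun]
        have hlen : s'.length < L := by rw [← hL]; simp
        rw [IHL s'.length hlen s' rfl z' hss m le_rfl]
        have hLeq : L = s'.length + 1 := by rw [← hL]; simp
        rw [hLeq, D_one]
  | succ j' IHj =>
      -- decomposition by the root
      have hbase := IHj (le_trans (Nat.le_succ j') hjm)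
      clear IHj
      subst hL
      -- the backwards bijection
      let g : (TS (cfun m s z j') ⊕
          (Σ i : Fin s.length,
            TS (cfun m (s.take i) (s[(i : ℕ)]) (m-1)) × TS (cfun m (s.drop ((i : ℕ)+1)) z (j'+1))))
          → TS (cfun m s z (j'+1)) := fun x =>
        match x with
        | Sum.inl ⟨l, hl⟩ => ⟨BT.node l z BT.leaf, by
            refine ⟨hl.1, trivial, ?_, ?_⟩
            · intro a ha
              have hpos : 0 < cfun m s z j' a := by rw [← hl.2 a]; exact cnt_pos_of_mem ha
              by_cases h1 : a ∈ s
              · exact (hlt a h1).le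
              · by_cases h2 : a = z
                · exact h2.le
                · simp [cfun, h1, h2] at hpos
            · intro a ha; exact absurd ha id, by
            intro a
            rw [cnt_node, hl.2 a]
            show cfun m s z j' a + cnt a BT.leaf + _ = _
            have hleaf : cnt a BT.leaf = 0 := rfl
            rw [hleaf]
            by_cases h1 : a ∈ s
            · have h2 : a ≠ z := fun h => hzs (h ▸ h1)
              simp [cfun, h1, h2]
            · by_cases h2 : a = z
              · subst h2; simp [cfun, h1]
              · simp [cfun, h1, h2]⟩
        | Sum.inr ⟨i, ⟨l, hl⟩, ⟨r, hr⟩⟩ => ⟨BT.node l (s[(i : ℕ)]) r, by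
            have hymem : s[(i : ℕ)] ∈ s := List.getElem_mem i.2
            refine ⟨hl.1, hr.1, ?_, ?_⟩
            · intro a ha
              have hpos : 0 < cfun m (s.take i) (s[(i : ℕ)]) (m-1) a := by
                rw [← hl.2 a]; exact cnt_pos_of_mem ha
              by_cases h1 : a ∈ s.take i
              · exact (mem_take_lt hss i.2 h1).le
              · by_cases h2 : a = s[(i : ℕ)]
                · exact h2.le
                · simp [cfun, h1, h2] at hpos
            · intro a ha
              have hpos : 0 < cfun m (s.drop ((i : ℕ)+1)) z (j'+1) a := by
                rw [← hr.2 a]; exact cnt_pos_of_mem ha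
              by_cases h1 : a ∈ s.drop ((i : ℕ)+1)
              · exact mem_drop_gt hss i.2 h1
              · by_cases h2 : a = z
                · exact h2 ▸ hlt _ hymem
                · simp [cfun, h1, h2] at hpos, by
            intro a
            have hymem : s[(i : ℕ)] ∈ s := List.getElem_mem i.2
            have hynz : s[(i : ℕ)] ≠ z := fun h => hzs (h ▸ hymem)
            have hyz : s[(i : ℕ)] < z := hlt _ hymem
            rw [cnt_node, hl.2 a, hr.2 a]
            by_cases h1 : a = s[(i : ℕ)]
            · subst h1
              have hnt : s[(i : ℕ)] ∉ s.take i := fun h => lt_irrefl _ (mem_take_lt hss i.2 h)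
              have hnd : s[(i : ℕ)] ∉ s.drop ((i : ℕ)+1) := fun h => lt_irrefl _ (mem_drop_gt hss i.2 h)
              have e1 : cfun m (s.take i) (s[(i : ℕ)]) (m-1) (s[(i : ℕ)]) = m - 1 := by
                simp [cfun, hnt]
              have e2 : cfun m (s.drop ((i : ℕ)+1)) z (j'+1) (s[(i : ℕ)]) = 0 := by
                simp [cfun, hnd, hynz]
              have e3 : cfun m s z (j'+1) (s[(i : ℕ)]) = m := by simp [cfun, hymem]
              rw [e1, e2, e3, if_pos rfl]
              omega
            · by_cases h2 : a ∈ s.take i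
              · have haly : a < s[(i : ℕ)] := mem_take_lt hss i.2 h2
                have has : a ∈ s := List.take_subset _ _ h2
                have hnd : a ∉ s.drop ((i : ℕ)+1) :=
                  fun h => absurd (mem_drop_gt hss i.2 h) (not_lt.2 haly.le)
                have hanz : a ≠ z := ne_of_lt (haly.trans hyz)
                simp [cfun, h2, hnd, hanz, h1, has]
              · by_cases h3 : a ∈ s.drop ((i : ℕ)+1)
                · have hya : s[(i : ℕ)] < a := mem_drop_gt hss i.2 h3
                  have has : a ∈ s := List.drop_subset _ _ h3
                  have hanz : a ≠ z := by
                    intro h; exact hzs (h ▸ has)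
                  simp [cfun, h2, h3, h1, has, hanz]
                · by_cases h4 : a = z
                  · have hns : a ∉ s := fun h => hzs (h4 ▸ h)
                    have hnt : a ∉ s.take i := fun h => hns (List.take_subset _ _ h)
                    have e1 : cfun m (s.take i) (s[(i : ℕ)]) (m-1) a = 0 := by
                      simp [cfun, hnt, h1]
                    have e2 : cfun m (s.drop ((i : ℕ)+1)) z (j'+1) a = j'+1 := by
                      simp [cfun, h4, show z ∉ s.drop ((i : ℕ)+1) from h4 ▸ h3]
                    have e3 : cfun m s z (j'+1) a = j'+1 := by
                      simp [cfun, h4, hzs]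
                    rw [e1, e2, e3, if_neg h1]
                    omega
                  · have hns : a ∉ s := by
                      intro h
                      rw [take_split s i.2, List.mem_append, List.mem_cons] at h
                      rcases h with h | h | h
                      · exact h2 h
                      · exact h1 h
                      · exact h3 h
                    simp [cfun, h1, h2, h3, h4, hns]⟩
      have hbij : Function.Bijective g := by
        constructor
        · rintro (⟨l, hl⟩ | ⟨i, ⟨l, hl⟩, ⟨r, hr⟩⟩) (⟨l', hl'⟩ | ⟨i', ⟨l', hl'⟩, ⟨r', hr'⟩⟩) h
          · have h2 : BT.node l z BT.leaf = BT.node l' z BT.leaf := congrArg Subtype.val h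
            injection h2 with e1 e2 e3
            exact congrArg Sum.inl (Subtype.ext e1)
          · have h2 : BT.node l z BT.leaf = BT.node l' (s[(i' : ℕ)]) r' := congrArg Subtype.val h
            injection h2 with e1 e2 e3
            exact absurd (e2 ▸ List.getElem_mem i'.2 : z ∈ s) hzs
          · have h2 : BT.node l (s[(i : ℕ)]) r = BT.node l' z BT.leaf := congrArg Subtype.val h
            injection h2 with e1 e2 e3
            exact absurd (e2 ▸ List.getElem_mem i.2 : z ∈ s) hzs
          · have h2 : BT.node l (s[(i : ℕ)]) r = BT.node l' (s[(i' : ℕ)]) r' := congrArg Subtype.val h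
            injection h2 with e1 e2 e3
            have hii : i = i' := by
              by_contra hne
              have hne2 : (i : ℕ) ≠ (i' : ℕ) := fun h => hne (Fin.ext h)
              rcases Nat.lt_or_ge (i : ℕ) (i' : ℕ) with hlt2 | hge
              · exact absurd e2 (ne_of_lt (List.pairwise_iff_getElem.1 hss _ _ i.2 i'.2 hlt2))
              · have hlt3 : (i' : ℕ) < (i : ℕ) := by omega
                exact absurd e2.symm
                  (ne_of_lt (List.pairwise_iff_getElem.1 hss _ _ i'.2 i.2 hlt3))
            subst hii
            rcases hl with _; rcases hl' with _
            congr 1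
            refine Sigma.ext rfl ?_
            simp only [heq_eq_eq]
            exact Prod.ext (Subtype.ext e1) (Subtype.ext e3)
        · rintro ⟨T, hv, hcnt⟩
          cases T with
          | leaf =>
              exfalso
              have h1 := hcnt z
              have h2 : cnt z BT.leaf = 0 := rfl
              rw [h2] at h1
              simp [cfun, hzs] at h1
          | node l y r =>
              obtain ⟨hvl, hvr, hbl, hbr⟩ := hv
              have hy : y ∈ s ∨ y = z := by
                have h1 := hcnt y
                rw [cnt_node, if_pos rfl] at h1
                by_contra h2
                push_neg at h2
                simp [cfun, h2.1, h2.2] at h1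
              by_cases hyz : y = z
              · subst hyz
                have hrleaf : r = BT.leaf := by
                  apply eq_leaf_of_cnt_zero
                  intro a
                  by_cases hmem : mem a r
                  · have hya := hbr a hmem
                    have hans : a ∉ s := fun h => absurd (hlt a h) (not_lt.2 hya.le)
                    have hanz : a ≠ y := ne_of_gt hya
                    have h1 := hcnt a
                    rw [cnt_node] at h1
                    have e0 : cfun m s y (j'+1) a = 0 := by simp [cfun, hans, hanz]
                    rw [e0, if_neg hanz] at h1
                    omega
                  · exact cnt_eq_zero_of_not_mem hmem
                subst hrleaf
                refine ⟨Sum.inl ⟨l, hvl, ?_⟩, rfl⟩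
                intro a
                have h1 := hcnt a
                rw [cnt_node] at h1
                have hleaf : cnt a BT.leaf = 0 := rfl
                rw [hleaf] at h1
                by_cases h2 : a = y
                · have e0 : cfun m s y (j'+1) a = j' + 1 := by simp [cfun, h2, hzs]
                  have e1 : cfun m s y j' a = j' := by simp [cfun, h2, hzs]
                  rw [e0, if_pos h2] at h1
                  rw [e1]
                  omega
                · have e0 : cfun m s y (j'+1) a = cfun m s y j' a := by
                    by_cases h3 : a ∈ s <;> simp [cfun, h2, h3]
                  rw [if_neg h2, e0] at h1
                  omega
              · have hys : y ∈ s := hy.resolve_right hyz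
                obtain ⟨i, hi, hyi⟩ := List.getElem_of_mem hys
                subst hyi
                have hcr0 : ∀ a, a ≤ s[i] → cnt a r = 0 := fun a hay =>
                  cnt_eq_zero_of_not_mem (fun hmem => absurd (hbr a hmem) (not_lt.2 hay))
                have hcl0 : ∀ a, s[i] < a → cnt a l = 0 := fun a hya =>
                  cnt_eq_zero_of_not_mem (fun hmem => absurd (hbl a hmem) (not_le.2 hya))
                refine ⟨Sum.inr ⟨⟨i, hi⟩, ⟨l, hvl, ?_⟩, ⟨r, hvr, ?_⟩⟩, rfl⟩
                · intro a
                  have h1 := hcnt a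
                  rw [cnt_node] at h1
                  by_cases ha1 : a = s[i]
                  · subst ha1
                    have hnt : s[i] ∉ s.take i := fun h => lt_irrefl _ (mem_take_lt hss hi h)
                    rw [hcr0 _ le_rfl] at h1
                    have e0 : cfun m s z (j'+1) (s[i]) = m := by simp [cfun, hys]
                    have e1 : cfun m (s.take i) (s[i]) (m-1) (s[i]) = m - 1 := by
                      simp [cfun, hnt]
                    rw [e0, if_pos rfl] at h1
                    rw [e1]
                    omega
                  · by_cases ha2 : a ∈ s.take i
                    · have haly := mem_take_lt hss hi ha2
                      have has : a ∈ s := List.take_subset _ _ ha2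
                      rw [hcr0 a haly.le] at h1
                      have e0 : cfun m s z (j'+1) a = m := by simp [cfun, has]
                      have e1 : cfun m (s.take i) (s[i]) (m-1) a = m := by simp [cfun, ha2]
                      rw [e0, if_neg ha1] at h1
                      rw [e1]
                      omega
                    · simp only [cfun, if_neg ha2, if_neg ha1]
                      by_cases ha3 : s[i] < a
                      · exact hcl0 a ha3
                      · -- a < s[i] but not in take i, not equal: a ∉ s
                        have has : a ∉ s := by
                          intro h
                          rw [take_split s hi, List.mem_append, List.mem_cons] at h
                          rcases h with h | h | h
                          · exact ha2 h
                          · exact ha1 h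
                          · exact ha3 (mem_drop_gt hss hi h)
                        have hanz : a ≠ z := by
                          intro h; subst h
                          exact ha3 (hlt _ hys)
                        have e0 : cfun m s z (j'+1) a = 0 := by simp [cfun, has, hanz]
                        rw [e0, if_neg ha1] at h1
                        omega
                · intro a
                  have h1 := hcnt a
                  rw [cnt_node] at h1
                  by_cases ha1 : a ∈ s.drop (i+1)
                  · have hya := mem_drop_gt hss hi ha1
                    have has : a ∈ s := List.drop_subset _ _ ha1
                    have hane : a ≠ s[i] := ne_of_gt hya
                    rw [hcl0 a hya] at h1
                    have e0 : cfun m s z (j'+1) a = m := by simp [cfun, has]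
                    have e1 : cfun m (s.drop (i+1)) z (j'+1) a = m := by simp [cfun, ha1]
                    rw [e0, if_neg hane] at h1
                    rw [e1]
                    omega
                  · by_cases ha2 : a = z
                    · have hane : a ≠ s[i] := by
                        rw [ha2]; exact fun h => hzs (by rw [h]; exact hys)
                      have hsia : s[i] < a := by rw [ha2]; exact hlt _ hys
                      have hans : a ∉ s := fun h => hzs (ha2 ▸ h)
                      rw [hcl0 a hsia, if_neg hane] at h1
                      have e3 : cfun m s z (j'+1) a = j' + 1 := by simp [cfun, ha2, hzs]
                      rw [e3] at h1
                      have e4 : cfun m (s.drop (i+1)) z (j'+1) a = j' + 1 := by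
                        simp [cfun, ha2, show z ∉ s.drop (i+1) from ha2 ▸ ha1]
                      rw [e4]
                      omega
                    · simp only [cfun, if_neg ha1, if_neg ha2]
                      by_cases ha3 : a ≤ s[i]
                      · exact hcr0 a ha3
                      · have hya : s[i] < a := not_le.1 ha3
                        have has : a ∉ s := by
                          intro h
                          rw [take_split s hi, List.mem_append, List.mem_cons] at h
                          rcases h with h | h | h
                          · exact absurd (mem_take_lt hss hi h) (not_lt.2 hya.le)
                          · exact absurd h (ne_of_gt hya)
                          · exact ha1 h
                        have e0 : cfun m s z (j'+1) a = 0 := by simp [cfun, has, ha2]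
                        rw [e0, if_neg (ne_of_gt hya)] at h1
                        omega
      -- cardinality bookkeeping
      rw [← Nat.card_eq_of_bijective g hbij, Nat.card_sum, nat_card_sigma, hbase]
      have hterm : ∀ i : Fin s.length,
          Nat.card (TS (cfun m (s.take i) (s[(i : ℕ)]) (m-1)) ×
            TS (cfun m (s.drop ((i : ℕ)+1)) z (j'+1))) =
          D m m (i : ℕ) * D m (j'+2) (s.length - 1 - (i : ℕ)) := by
        intro i
        rw [Nat.card_prod]
        have ht1 : Nat.card (TS (cfun m (s.take i) (s[(i : ℕ)]) (m-1))) = D m m (i : ℕ) := by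
          have hlen : (s.take (i : ℕ)).length = (i : ℕ) := by
            simp [List.length_take, Nat.min_eq_left i.2.le]
          have := IHL (i : ℕ) i.2 (s.take i) hlen (s[(i : ℕ)])
            (take_concat_sorted hss i.2) (m-1) (Nat.sub_le m 1)
          rw [this, Nat.sub_add_cancel hm]
        have ht2 : Nat.card (TS (cfun m (s.drop ((i : ℕ)+1)) z (j'+1))) =
            D m (j'+2) (s.length - 1 - (i : ℕ)) := by
          have hlen : (s.drop ((i : ℕ)+1)).length = s.length - 1 - (i : ℕ) := by
            simp [List.length_drop]; omega
          have hlt2 : s.length - 1 - (i : ℕ) < s.length := by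
            have := i.2; omega
          have := IHL (s.length - 1 - (i : ℕ)) hlt2 (s.drop ((i : ℕ)+1)) hlen z
            (drop_concat_sorted hs (i : ℕ)) (j'+1) hjm
          rw [this]
        rw [ht1, ht2]
      have hsig : (∑ i : Fin s.length,
          Nat.card (TS (cfun m (s.take i) (s[(i : ℕ)]) (m-1)) ×
            TS (cfun m (s.drop ((i : ℕ)+1)) z (j'+1)))) =
          ∑ i ∈ Finset.range s.length, D m m i * D m (j'+2) (s.length - 1 - i) := by
        rw [← Fin.sum_univ_eq_sum_range]
        exact Finset.sum_congr rfl (fun i _ => hterm i)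
      rw [hsig]
      -- final arithmetic
      have key : ∀ n : ℕ,
          D m (j'+1) n + (∑ i ∈ Finset.range n, D m m i * D m (j'+2) (n - 1 - i)) =
          D m (j'+1+1) n := by
        intro n
        cases n with
        | zero => simp [D_zero_right]
        | succ K =>
            have hconv := D_conv m (j'+2) m K
            have hstep : (∑ i ∈ Finset.range (K+1), D m m i * D m (j'+2) (K + 1 - 1 - i)) =
                ∑ i ∈ Finset.range (K+1), D m m i * D m (j'+2) (K - i) := by
              apply Finset.sum_congr rfl
              intro i _
              have : K + 1 - 1 - i = K - i := by omega
              rw [this]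
            rw [hstep, hconv, D_rec m (j'+1) K]
            have : m + (j'+2) = j'+1+1+m := by omega
            rw [this]
      exact key s.length

end MainCount

section Final

open BT

theorem card_TS_full (m : ℕ) (hm : 1 ≤ m) (n : ℕ) :
    Nat.card (TS (fun _ : Fin n => m)) = D m 1 n := by
  cases n with
  | zero =>
      haveI : Unique (TS (fun _ : Fin 0 => m)) :=
        { default := ⟨BT.leaf, trivial, fun a => a.elim0⟩
          uniq := fun T => by
            apply Subtype.ext
            cases hT : T.1 with
            | leaf => rfl
            | node l y r => exact y.elim0 }
      rw [Nat.card_unique, D_zero_right]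
  | succ N =>
      have hne : List.finRange (N+1) ≠ [] := by
        intro h
        have := List.length_finRange (n := N+1)
        rw [h] at this
        simp at this
      have hlast : (List.finRange (N+1)).getLast hne = Fin.last N := by
        rw [List.getLast_eq_getElem, List.getElem_finRange]
        have : (List.finRange (N+1)).length - 1 = N := by simp
        apply Fin.ext
        simp [Fin.last]
      have hconcat : (List.finRange (N+1)).dropLast ++ [Fin.last N] = List.finRange (N+1) := by
        rw [← hlast]
        exact List.dropLast_append_getLast hne
      have hsorted : ((List.finRange (N+1)).dropLast ++ [Fin.last N]).Pairwise (· < ·) := by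
        rw [hconcat]
        exact List.pairwise_lt_finRange (N+1)
      have hcf : cfun m (List.finRange (N+1)).dropLast (Fin.last N) m = (fun _ : Fin (N+1) => m) := by
        funext a
        have hmem : a ∈ (List.finRange (N+1)).dropLast ++ [Fin.last N] := by
          rw [hconcat]; exact List.mem_finRange a
        rcases List.mem_append.1 hmem with h | h
        · simp [cfun, h]
        · rw [List.mem_singleton] at h
          by_cases h2 : a ∈ (List.finRange (N+1)).dropLast <;> simp [cfun, h, h2]
      have hlen : (List.finRange (N+1)).dropLast.length = N := by simp
      rw [← hcf, count_TS m hm N _ hlen (Fin.last N) hsorted m le_rfl, D_one]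

end Final

end SylvProof

theorem count_congr_inst {α : Type*} (d1 d2 : DecidableEq α) (a : α) (l : List α) :
    @List.count α (@instBEqOfDecidableEq α d1) a l = @List.count α (@instBEqOfDecidableEq α d2) a l := by
  have h : d1 = d2 := by
    funext x y
    exact Subsingleton.elim _ _
  subst h
  rfl

open SylvProof SylvProof.BT Relation in
/-- The number of sylvester classes of `m`-permutations of `n`
is the Fuss–Catalan number `(1/(mn+1)) * C((m+1)n, n)`. -/
theorem card_sylvester_classes_mPermutations (m n : ℕ) (hm : 1 ≤ m) :
    Nat.card
      (Quotient (Setoid.comap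
        (Subtype.val : {w : List (Fin n) // ∀ k, w.count k = m} → List (Fin n))
        (Relation.EqvGen.setoid SylvStep))) =
      Nat.choose ((m + 1) * n) n / (m * n + 1) := by
  have hE : Quotient (Setoid.comap
        (Subtype.val : {w : List (Fin n) // ∀ k, w.count k = m} → List (Fin n))
        (Relation.EqvGen.setoid SylvStep)) ≃ TS (fun _ : Fin n => m) :=
    { toFun := Quotient.lift
        (fun w => (⟨P w.1, valid_P _, fun a => by
          rw [cnt_P, count_congr_inst _ (instDecidableEqFin n)]
          exact w.2 a⟩ : TS (fun _ : Fin n => m)))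
        (fun w w' h => Subtype.ext (P_eqv h))
      invFun := fun T => Quotient.mk _ ⟨canon T.1, fun k => by
        rw [count_congr_inst (instDecidableEqFin n) (fun a b => LinearOrder.toDecidableEq a b),
          count_canon]
        exact T.2.2 k⟩
      left_inv := by
        intro q
        induction q using Quotient.ind with
        | _ w =>
            apply Quotient.sound
            show EqvGen SylvStep (canon (P w.1)) w.1
            exact EqvGen.symm _ _ (toCanon w.1.length w.1 le_rfl)
      right_inv := fun T => Subtype.ext (P_canon T.2.1) }
  rw [Nat.card_congr hE, card_TS_full m hm n]
  have hclosed := D_one_closed m n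
  symm
  apply Nat.div_eq_of_eq_mul_left (by omega : 0 < m * n + 1)
  exact hclosed.symm
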